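/- Let N ≥ 2, let ℓ_1, ..., ℓ_N : ℝ^d → ℝ be C² functions with average L = (1/N)Σ_p ℓ_p, and let π be a uniformly random permutation of {1,...,N}. Then E_π[∇²(ℓ_{π(1)} − L)(θ) ∇(ℓ_{π(2)} − L)(θ)] = −∇(tr Σ)(θ)/(2(N−1)) and E_π[∇²(ℓ_{π(1)} − L)(θ) ∇(ℓ_{π(1)} − L)(θ)] = ∇(tr Σ)(θ)/2, where Σ(θ) is the empirical covariance matrix with entries Σ_{ij} = (1/N) Σ_p ∂_i(ℓ_p − L) ∂_j(ℓ_p − L). -/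

import Mathlib

open Finset

/-- Partial derivative in direction `j`. -/
noncomputable def pd {d : ℕ} (f : (Fin d → ℝ) → ℝ) (j : Fin d) (x : Fin d → ℝ) : ℝ :=
  fderiv ℝ f x (Pi.single j 1)


lemma permComp {N : ℕ} (σ : Equiv.Perm (Fin N)) (F : Equiv.Perm (Fin N) → ℝ) :
    ∑ π : Equiv.Perm (Fin N), F (π * σ) = ∑ π, F π :=
  Fintype.sum_bijective (· * σ) (Group.mulRight_bijective σ) _ _ (fun _ => rfl)

lemma permA {N : ℕ} (f : Fin N → ℝ) (k : Fin N) :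
    (N : ℝ) * ∑ π : Equiv.Perm (Fin N), f (π k) = (Nat.factorial N : ℝ) * ∑ p, f p := by
  have h1 : ∀ m : Fin N, ∑ π : Equiv.Perm (Fin N), f (π m) = ∑ π : Equiv.Perm (Fin N), f (π k) := by
    intro m
    calc ∑ π : Equiv.Perm (Fin N), f (π m)
        = ∑ π : Equiv.Perm (Fin N), f ((π * Equiv.swap m k) m) := (permComp _ _).symm
      _ = ∑ π : Equiv.Perm (Fin N), f (π k) := by
          simp only [Equiv.Perm.mul_apply, Equiv.swap_apply_left]
  have h2 : ∑ m : Fin N, ∑ π : Equiv.Perm (Fin N), f (π m)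
      = (Nat.factorial N : ℝ) * ∑ p, f p := by
    rw [Finset.sum_comm]
    have : ∀ π : Equiv.Perm (Fin N), ∑ m, f (π m) = ∑ p, f p := fun π => Equiv.sum_comp π f
    rw [Finset.sum_congr rfl fun π _ => this π, Finset.sum_const, Finset.card_univ,
      Fintype.card_perm, Fintype.card_fin, nsmul_eq_mul]
  rw [← h2, Finset.sum_congr rfl fun m _ => h1 m, Finset.sum_const, Finset.card_univ,
    Fintype.card_fin, nsmul_eq_mul]

lemma permB {N : ℕ} (hN : 1 ≤ N) (g : Fin N → Fin N → ℝ) (hg : ∀ p, ∑ q, g p q = 0)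
    (k0 k1 : Fin N) (hk : k0 ≠ k1) :
    ((N : ℝ) - 1) * ∑ π : Equiv.Perm (Fin N), g (π k0) (π k1)
      = -∑ π : Equiv.Perm (Fin N), g (π k0) (π k0) := by
  have h1 : ∀ m ∈ Finset.univ.erase k0,
      ∑ π : Equiv.Perm (Fin N), g (π k0) (π m) = ∑ π : Equiv.Perm (Fin N), g (π k0) (π k1) := by
    intro m hm
    have hm0 : m ≠ k0 := Finset.ne_of_mem_erase hm
    calc ∑ π : Equiv.Perm (Fin N), g (π k0) (π m)
        = ∑ π : Equiv.Perm (Fin N), g ((π * Equiv.swap m k1) k0) ((π * Equiv.swap m k1) m) :=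
          ((permComp (Equiv.swap m k1) (fun π => g (π k0) (π m)))).symm
      _ = ∑ π : Equiv.Perm (Fin N), g (π k0) (π k1) := by
          simp only [Equiv.Perm.mul_apply, Equiv.swap_apply_left,
            Equiv.swap_apply_of_ne_of_ne hm0.symm hk]
  have h2 : ∑ m ∈ Finset.univ.erase k0, ∑ π : Equiv.Perm (Fin N), g (π k0) (π m)
      = ((N : ℝ) - 1) * ∑ π : Equiv.Perm (Fin N), g (π k0) (π k1) := by
    rw [Finset.sum_congr rfl h1, Finset.sum_const, Finset.card_erase_of_mem (Finset.mem_univ _),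
      Finset.card_univ, Fintype.card_fin, nsmul_eq_mul, Nat.cast_sub hN, Nat.cast_one]
  rw [← h2, Finset.sum_comm]
  have h3 : ∀ π : Equiv.Perm (Fin N),
      ∑ m ∈ Finset.univ.erase k0, g (π k0) (π m) = -g (π k0) (π k0) := by
    intro π
    have : ∑ m, g (π k0) (π m) = 0 := by rw [Equiv.sum_comp π (g (π k0))]; exact hg _
    have h4 := Finset.add_sum_erase Finset.univ (fun m => g (π k0) (π m)) (Finset.mem_univ k0)
    linarith [h4, this]
  rw [Finset.sum_congr rfl fun π _ => h3 π, Finset.sum_neg_distrib]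

lemma pdSumZero {d N : ℕ} (G : Fin N → (Fin d → ℝ) → ℝ) (hG : ∀ p, ContDiff ℝ 2 (G p))
    (hsum : ∀ y, ∑ p, G p y = 0) (j : Fin d) (x : Fin d → ℝ) :
    ∑ p, pd (G p) j x = 0 := by
  have h1 : ∑ p, fderiv ℝ (G p) x = fderiv ℝ (fun y => ∑ p, G p y) x :=
    (fderiv_fun_sum fun p _ => ((hG p).differentiable (by norm_num)).differentiableAt).symm
  have h2 : (fun y : Fin d → ℝ => ∑ p, G p y) = fun _ => 0 := funext hsum
  have h3 : ∑ p, fderiv ℝ (G p) x = 0 := by rw [h1, h2, fderiv_fun_const]; rfl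
  calc ∑ p, pd (G p) j x = (∑ p, fderiv ℝ (G p) x) (Pi.single j 1) := by
        rw [ContinuousLinearMap.sum_apply]; rfl
    _ = 0 := by rw [h3]; rfl

lemma pdTrace {d N : ℕ} (G : Fin N → (Fin d → ℝ) → ℝ) (hG : ∀ p, ContDiff ℝ 2 (G p))
    (θ : Fin d → ℝ) (i : Fin d) :
    pd (fun x => (1 / (N : ℝ)) * ∑ p, ∑ j, (pd (G p) j x) ^ 2) i θ
      = (2 / (N : ℝ)) * ∑ p, ∑ j, pd (pd (G p) j) i θ * pd (G p) j θ := by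
  have hF : ∀ p j, ContDiff ℝ 1 (pd (G p) j) := fun p j =>
    ((hG p).fderiv_right (by norm_num)).clm_apply contDiff_const
  have hD : ∀ p j, HasFDerivAt (pd (G p) j) (fderiv ℝ (pd (G p) j) θ) θ := fun p j =>
    (((hF p j).differentiable one_ne_zero) θ).hasFDerivAt
  have hsq : ∀ p j, HasFDerivAt (fun x => (pd (G p) j x) ^ 2)
      ((2 * pd (G p) j θ) • fderiv ℝ (pd (G p) j) θ) θ := by
    intro p j
    have : HasFDerivAt (fun x => pd (G p) j x * pd (G p) j x) _ θ := (hD p j).mul (hD p j)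
    simpa [pow_two, two_mul, add_smul] using this
  have htot : HasFDerivAt (fun x => (1 / (N : ℝ)) * ∑ p, ∑ j, (pd (G p) j x) ^ 2)
      ((1 / (N : ℝ)) • ∑ p, ∑ j, (2 * pd (G p) j θ) • fderiv ℝ (pd (G p) j) θ) θ :=
    (HasFDerivAt.fun_sum fun p _ => HasFDerivAt.fun_sum fun j _ => hsq p j).const_mul _
  have key : pd (fun x => (1 / (N : ℝ)) * ∑ p, ∑ j, (pd (G p) j x) ^ 2) i θ
      = ((1 / (N : ℝ)) • ∑ p, ∑ j, (2 * pd (G p) j θ) • fderiv ℝ (pd (G p) j) θ)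
          (Pi.single i 1) := by
    show (fderiv ℝ _ θ) (Pi.single i 1) = _
    rw [htot.fderiv]
  rw [key, ContinuousLinearMap.smul_apply, ContinuousLinearMap.sum_apply, smul_eq_mul]
  rw [show (2 / (N:ℝ)) * ∑ p, ∑ j, pd (pd (G p) j) i θ * pd (G p) j θ
      = 1 / (N:ℝ) * ∑ p, ∑ j, 2 * (pd (pd (G p) j) i θ * pd (G p) j θ) by
    rw [Finset.mul_sum, Finset.mul_sum]
    refine Finset.sum_congr rfl fun p _ => ?_
    rw [Finset.mul_sum, Finset.mul_sum]
    refine Finset.sum_congr rfl fun j _ => ?_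
    ring]
  congr 1
  refine Finset.sum_congr rfl fun p _ => ?_
  rw [ContinuousLinearMap.sum_apply]
  refine Finset.sum_congr rfl fun j _ => ?_
  rw [ContinuousLinearMap.smul_apply, smul_eq_mul]
  show 2 * pd (G p) j θ * pd (pd (G p) j) i θ = _
  ring

theorem aux (d N : ℕ) (hN : 2 ≤ N) (G : Fin N → (Fin d → ℝ) → ℝ)
    (hG : ∀ p, ContDiff ℝ 2 (G p)) (hsum : ∀ y, ∑ p, G p y = 0)
    (θ : Fin d → ℝ) (i : Fin d) (k0 k1 : Fin N) (hk : k0 ≠ k1) :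
    ((1 / (Nat.factorial N : ℝ)) * ∑ π : Equiv.Perm (Fin N), ∑ j,
        pd (pd (G (π k0)) j) i θ * pd (G (π k1)) j θ)
      = -pd (fun x => (1 / (N : ℝ)) * ∑ p, ∑ j, (pd (G p) j x) ^ 2) i θ / (2 * ((N : ℝ) - 1)) ∧
    ((1 / (Nat.factorial N : ℝ)) * ∑ π : Equiv.Perm (Fin N), ∑ j,
        pd (pd (G (π k0)) j) i θ * pd (G (π k0)) j θ)
      = pd (fun x => (1 / (N : ℝ)) * ∑ p, ∑ j, (pd (G p) j x) ^ 2) i θ / 2 := by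
  set g : Fin N → Fin N → ℝ := fun p q => ∑ j, pd (pd (G p) j) i θ * pd (G q) j θ with hgdef
  have hg : ∀ p, ∑ q, g p q = 0 := by
    intro p
    rw [hgdef]
    simp only []
    rw [Finset.sum_comm]
    refine Finset.sum_eq_zero fun j _ => ?_
    rw [← Finset.mul_sum, pdSumZero G hG hsum j θ, mul_zero]
  set S : ℝ := ∑ p, g p p with hSdef
  have hR : pd (fun x => (1 / (N : ℝ)) * ∑ p, ∑ j, (pd (G p) j x) ^ 2) i θ
      = 2 / (N : ℝ) * S := pdTrace G hG θ i
  have hA : (N : ℝ) * ∑ π : Equiv.Perm (Fin N), g (π k0) (π k0)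
      = (Nat.factorial N : ℝ) * S := permA (fun p => g p p) k0
  have hB : ((N : ℝ) - 1) * ∑ π : Equiv.Perm (Fin N), g (π k0) (π k1)
      = -∑ π : Equiv.Perm (Fin N), g (π k0) (π k0) := permB (by omega) g hg k0 k1 hk
  have hNr : (N : ℝ) ≠ 0 := by positivity
  have hN1 : (N : ℝ) - 1 ≠ 0 := by
    have : (2 : ℝ) ≤ (N : ℝ) := by exact_mod_cast hN
    linarith
  have hNf : (Nat.factorial N : ℝ) ≠ 0 := by positivity
  rw [hR]
  constructor
  · show (1 / (Nat.factorial N : ℝ)) * ∑ π : Equiv.Perm (Fin N), g (π k0) (π k1) = _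
    field_simp
    nlinarith [hA, hB]
  · show (1 / (Nat.factorial N : ℝ)) * ∑ π : Equiv.Perm (Fin N), g (π k0) (π k0) = _
    field_simp
    linarith [hA]

/-- Averaging over dataset permutations: with `L = (1/N) ∑ ℓ_p` and
`tr Σ(θ) = (1/N) ∑_p ‖∇(ℓ_p − L)(θ)‖²`, for a uniformly random permutation `π`,
`E_π[∇²(ℓ_{π(1)} − L) ∇(ℓ_{π(2)} − L)] = −∇(tr Σ)/(2(N−1))` and
`E_π[∇²(ℓ_{π(1)} − L) ∇(ℓ_{π(1)} − L)] = ∇(tr Σ)/2`, componentwise. -/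
theorem stmt19 (d N : ℕ) (hN : 2 ≤ N) (ℓ : Fin N → (Fin d → ℝ) → ℝ)
    (hℓ : ∀ p, ContDiff ℝ 2 (ℓ p)) (θ : Fin d → ℝ) :
    ∀ i : Fin d,
      ((1 / (Nat.factorial N : ℝ)) * ∑ π : Equiv.Perm (Fin N), ∑ j : Fin d,
          pd (pd (fun y => ℓ (π ⟨0, by omega⟩) y -
            (1 / (N : ℝ)) * ∑ p : Fin N, ℓ p y) j) i θ *
          pd (fun y => ℓ (π ⟨1, by omega⟩) y -
            (1 / (N : ℝ)) * ∑ p : Fin N, ℓ p y) j θ) =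
        -pd (fun x => (1 / (N : ℝ)) * ∑ p : Fin N, ∑ j : Fin d,
            (pd (fun y => ℓ p y - (1 / (N : ℝ)) * ∑ q : Fin N, ℓ q y) j x) ^ 2) i θ /
          (2 * ((N : ℝ) - 1)) ∧
      ((1 / (Nat.factorial N : ℝ)) * ∑ π : Equiv.Perm (Fin N), ∑ j : Fin d,
          pd (pd (fun y => ℓ (π ⟨0, by omega⟩) y -
            (1 / (N : ℝ)) * ∑ p : Fin N, ℓ p y) j) i θ *
          pd (fun y => ℓ (π ⟨0, by omega⟩) y -
            (1 / (N : ℝ)) * ∑ p : Fin N, ℓ p y) j θ) =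
        pd (fun x => (1 / (N : ℝ)) * ∑ p : Fin N, ∑ j : Fin d,
            (pd (fun y => ℓ p y - (1 / (N : ℝ)) * ∑ q : Fin N, ℓ q y) j x) ^ 2) i θ / 2 := by
  intro i
  have hNr : (N : ℝ) ≠ 0 := by positivity
  have hsum : ∀ y : Fin d → ℝ,
      ∑ p, (ℓ p y - (1 / (N : ℝ)) * ∑ q, ℓ q y) = 0 := by
    intro y
    rw [Finset.sum_sub_distrib, Finset.sum_const, Finset.card_univ, Fintype.card_fin,
      nsmul_eq_mul]
    field_simp
    ring
  exact aux d N hN (fun p y => ℓ p y - (1 / (N : ℝ)) * ∑ q, ℓ q y)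
    (fun p => (hℓ p).sub (contDiff_const.mul (ContDiff.sum fun q _ => hℓ q)))
    hsum θ i ⟨0, by omega⟩ ⟨1, by omega⟩ (by simp [Fin.ext_iff])
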